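/- Let k be a field and n, N ≥ 1. Let f ∈ k[y₁,…,yₙ] be a homogeneous polynomial that does not lie in the ideal (y₁^N,…,yₙ^N). Then there exists g ∈ k[y₁,…,yₙ] such that the coefficient of the monomial y₁^{N−1}·y₂^{N−1}⋯yₙ^{N−1} in the product f·g is nonzero. (Equivalently, the pairing (a,b) ↦ coefficient of ∏ᵢ yᵢ^{N−1} in ab on the ring k[y₁,…,yₙ]/(y₁^N,…,yₙ^N) is nondegenerate on homogeneous elements.) -/

import Mathlib

open MvPolynomial

/-- if a homogeneous polynomial `f` does not lie in `(y₁^N,…,yₙ^N)`, then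
some multiple `f·g` has nonzero coefficient at the monomial `y₁^{N−1}⋯yₙ^{N−1}`;
equivalently the pairing `(a,b) ↦ coeff of ∏ yᵢ^{N−1} in ab` is nondegenerate on
homogeneous elements of `k[y]/(y₁^N,…,yₙ^N)`. -/
theorem exists_multiple_with_nonzero_top_coeff (k : Type*) [Field k]
    (n N : ℕ) (hn : 1 ≤ n) (hN : 1 ≤ N)
    (f : MvPolynomial (Fin n) k) (m : ℕ) (hf : f.IsHomogeneous m)
    (hfI : f ∉ Ideal.span (Set.range fun i : Fin n => (X i : MvPolynomial (Fin n) k) ^ N)) :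
    ∃ g : MvPolynomial (Fin n) k,
      MvPolynomial.coeff (Finsupp.equivFunOnFinite.symm fun _ : Fin n => N - 1) (f * g) ≠ 0 := by
  have hspan : Ideal.span (Set.range fun i : Fin n => (X i : MvPolynomial (Fin n) k) ^ N)
      = Ideal.span ((fun s => monomial s (1 : k)) ''
        (Set.range fun i : Fin n => Finsupp.single i N)) := by
    rw [← Set.range_comp]
    exact congrArg Ideal.span (congrArg Set.range (funext fun i => X_pow_eq_monomial))
  rw [hspan, mem_ideal_span_monomial_image] at hfI
  push_neg at hfI
  obtain ⟨d, hd, hdom⟩ := hfI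
  have hdlt : ∀ i, d i ≤ N - 1 := by
    intro i
    have := hdom (Finsupp.single i N) ⟨i, rfl⟩
    have h2 : ¬ N ≤ d i := by
      intro h
      exact this fun j => by
        rcases eq_or_ne j i with rfl | hj
        · simpa using h
        · simp [Finsupp.single_apply, hj.symm]
    omega
  set e : Fin n →₀ ℕ := (Finsupp.equivFunOnFinite.symm fun i : Fin n => N - 1 - d i)
  refine ⟨monomial e 1, ?_⟩
  have hde : d + e = (Finsupp.equivFunOnFinite.symm fun _ : Fin n => N - 1) := by
    ext i
    have := hdlt i
    simp only [Finsupp.add_apply, e, Finsupp.coe_equivFunOnFinite_symm]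
    omega
  rw [← hde, coeff_mul_monomial, mul_one]
  exact mem_support_iff.mp hd
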